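/- (Binary case, p = 2.) Let C be an [n,k] binary code with generator matrix G = (I_k|M). Under the negative degree lexicographic order on F_2[X], the ideal I = I_C'·Loc_>(F_2[X]), where I_C' = ⟨(X_i+1) + ∏_{j∈supp(m_i)}(X_j+1) : 1 ≤ i ≤ k⟩ + ⟨(X_i+1)^2 + 1 : k+1 ≤ i ≤ n⟩, has standard basis S = { X_i − ∑_{∅ ≠ J ⊆ supp(m_i)} X_J : 1 ≤ i ≤ k } ∪ { X_i^2 : k+1 ≤ i ≤ n }, where X_J = ∏_{j∈J} X_j. -/

import Mathlib

open MvPolynomial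

noncomputable section

/-- `supp(m_i)` for a binary code: columns `j > k` with `g_{ij} ≠ 0`. -/
def suppM {n k : ℕ} (G : Fin k → Fin n → ZMod 2) (i : Fin k) : Finset (Fin n) :=
  Finset.univ.filter fun j => k ≤ (j : ℕ) ∧ G i j ≠ 0

/-- The translated binary code ideal
`I_C' = ⟨(X_i+1) + ∏_{j∈supp(m_i)}(X_j+1) : i ≤ k⟩ + ⟨(X_i+1)² + 1 : i > k⟩`. -/
def binCodeIdeal' (n k : ℕ) (hkn : k ≤ n) (G : Fin k → Fin n → ZMod 2) :
    Ideal (MvPolynomial (Fin n) (ZMod 2)) :=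
  Ideal.span
    ({f | ∃ i : Fin k, f = (X (Fin.castLE hkn i) + 1) + ∏ j ∈ suppM G i, (X j + 1)} ∪
      {f | ∃ i : Fin n, k ≤ (i : ℕ) ∧ f = (X i + 1) ^ 2 + 1})

def lexGt {n : ℕ} (a b : Fin n →₀ ℕ) : Prop :=
  ∃ i : Fin n, (∀ j, j < i → a j = b j) ∧ b i < a i

/-- Negative degree lexicographic order (a local order). -/
def negDegLexGt {n : ℕ} (a b : Fin n →₀ ℕ) : Prop :=
  (∑ j, a j) < (∑ j, b j) ∨ ((∑ j, a j) = (∑ j, b j) ∧ lexGt a b)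

def IsLeadMon {σ : Type*} {K : Type*} [CommSemiring K]
    (r : (σ →₀ ℕ) → (σ →₀ ℕ) → Prop) (f : MvPolynomial σ K) (α : σ →₀ ℕ) : Prop :=
  α ∈ f.support ∧ ∀ β ∈ f.support, β ≠ α → r α β

/-- The multiplicative set of polynomials with constant term `1`. -/
def unitSet (n : ℕ) (K : Type*) [CommSemiring K] : Submonoid (MvPolynomial (Fin n) K) :=
  Submonoid.comap
    (constantCoeff : MvPolynomial (Fin n) K →+* K).toMonoidHom (⊥ : Submonoid K)

/-- Leading terms (w.r.t. negative degree lex) of the members of `S`. -/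
def LTset {n : ℕ} {K : Type*} [CommSemiring K] (S : Set (MvPolynomial (Fin n) K)) :
    Set (MvPolynomial (Fin n) K) :=
  {m | ∃ f ∈ S, ∃ α, IsLeadMon negDegLexGt f α ∧ m = monomial α (f.coeff α)}

-- ===================== aux ======================
namespace BSB

variable {n k : ℕ}

abbrev R2 (n : ℕ) := MvPolynomial (Fin n) (ZMod 2)

/-- exponent vector of the squarefree monomial `∏_{j∈J} X j`. -/
def indF (J : Finset (Fin n)) : Fin n →₀ ℕ := ∑ j ∈ J, Finsupp.single j 1

lemma indF_apply (J : Finset (Fin n)) (j : Fin n) :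
    indF J j = if j ∈ J then 1 else 0 := by
  classical
  rw [indF, Finset.sum_apply']
  simp only [Finsupp.single_apply]
  rw [Finset.sum_ite_eq' J j (fun _ => 1)]

/-- total degree function. -/
def Dg (γ : Fin n →₀ ℕ) : ℕ := ∑ j, γ j

lemma Dg_single (j : Fin n) (e : ℕ) : Dg (Finsupp.single j e) = e := by
  classical
  rw [Dg]
  simp only [Finsupp.single_apply]
  rw [Finset.sum_ite_eq Finset.univ j (fun _ => e)]
  simp

lemma Dg_add (a b : Fin n →₀ ℕ) : Dg (a + b) = Dg a + Dg b := by
  simp [Dg, Finset.sum_add_distrib]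

lemma Dg_indF (J : Finset (Fin n)) : Dg (indF J) = J.card := by
  classical
  simp [Dg, indF_apply, Finset.sum_ite_mem]

lemma prod_X_eq (J : Finset (Fin n)) :
    (∏ j ∈ J, (X j : R2 n)) = monomial (indF J) 1 := by
  classical
  induction J using Finset.induction_on with
  | empty => simp [indF]
  | @insert a s ha ih =>
      rw [Finset.prod_insert ha, ih,
        show indF (insert a s) = Finsupp.single a 1 + indF s from Finset.sum_insert ha,
        X, monomial_mul, one_mul]


variable (G : Fin k → Fin n → ZMod 2)

/-- `∑_{∅ ≠ J ⊆ supp(m_i)} X_J`. -/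
def sPoly (i : Fin k) : R2 n :=
  ∑ J ∈ (suppM G i).powerset.filter (fun J => J ≠ ∅), ∏ j ∈ J, X j

lemma mem_suppM {i : Fin k} {j : Fin n} (h : j ∈ suppM G i) : k ≤ (j : ℕ) :=
  ((Finset.mem_filter.mp h).2).1

lemma key1 (hkn : k ≤ n) (i : Fin k) :
    (X (Fin.castLE hkn i) + 1) + ∏ j ∈ suppM G i, (X j + 1)
      = X (Fin.castLE hkn i) - sPoly G i := by
  classical
  have hprod : (∏ j ∈ suppM G i, ((X j : R2 n) + 1)) = sPoly G i + 1 := by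
    rw [Finset.prod_add]
    simp only [Finset.prod_const_one, mul_one]
    rw [← Finset.sum_filter_add_sum_filter_not ((suppM G i).powerset) (fun J => J ≠ ∅)]
    have h1 : Finset.filter (fun J => ¬J ≠ ∅) ((suppM G i).powerset) = {∅} := by
      ext J
      simp [not_not, Finset.mem_powerset]
      rintro rfl; exact Finset.empty_subset _
    rw [h1, sPoly]
    simp
  rw [hprod, CharTwo.sub_eq_add]
  linear_combination (CharTwo.two_eq_zero (R := R2 n))

lemma key2 (j : Fin n) : ((X j : R2 n) + 1) ^ 2 + 1 = X j ^ 2 := by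
  rw [CharTwo.add_sq, one_pow]
  rw [add_assoc, CharTwo.add_self_eq_zero, add_zero]

lemma coeff_sPoly {i : Fin k} {β : Fin n →₀ ℕ}
    (h : ∀ J, J ⊆ suppM G i → J ≠ ∅ → β ≠ indF J) :
    coeff β (sPoly G i) = 0 := by
  classical
  rw [sPoly, coeff_sum]
  refine Finset.sum_eq_zero fun J hJ => ?_
  rw [Finset.mem_filter, Finset.mem_powerset] at hJ
  rw [prod_X_eq, coeff_monomial, if_neg]
  exact fun hc => h J hJ.1 hJ.2 hc.symm

lemma support_sPoly {i : Fin k} {β : Fin n →₀ ℕ} (h : β ∈ (sPoly G i).support) :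
    ∃ J, J ⊆ suppM G i ∧ J ≠ ∅ ∧ β = indF J := by
  by_contra hc
  push_neg at hc
  exact mem_support_iff.mp h (coeff_sPoly G (fun J h1 h2 => hc J h1 (Finset.nonempty_iff_ne_empty.mpr h2)))

lemma indF_ne_single_low {i : Fin k} {J : Finset (Fin n)} (hJ : J ⊆ suppM G i)
    {i' : Fin n} (hi' : (i' : ℕ) < k) : indF J ≠ Finsupp.single i' 1 := by
  intro h
  have h1 : indF J i' = 1 := by rw [h, Finsupp.single_eq_same]
  rw [indF_apply] at h1
  by_cases hm : i' ∈ J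
  · exact absurd (mem_suppM G (hJ hm)) (Nat.not_le.mpr hi')
  · rw [if_neg hm] at h1; exact one_ne_zero h1.symm

lemma coeff_f1_self (hkn : k ≤ n) (i : Fin k) :
    coeff (Finsupp.single (Fin.castLE hkn i) 1)
      (X (Fin.castLE hkn i) - sPoly G i : R2 n) = 1 := by
  classical
  rw [coeff_sub, coeff_X' (R := ZMod 2), if_pos rfl,
    coeff_sPoly G (fun J hJ _ h => (indF_ne_single_low G hJ i.isLt h.symm).elim ), sub_zero]

lemma support_f1 (hkn : k ≤ n) {i : Fin k} {β : Fin n →₀ ℕ}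
    (h : β ∈ (X (Fin.castLE hkn i) - sPoly G i : R2 n).support) :
    β = Finsupp.single (Fin.castLE hkn i) 1 ∨
      ∃ J, J ⊆ suppM G i ∧ J ≠ ∅ ∧ β = indF J := by
  classical
  by_contra hc
  push_neg at hc
  obtain ⟨h1, h2⟩ := hc
  apply mem_support_iff.mp h
  rw [coeff_sub, coeff_X' (R := ZMod 2), if_neg (fun hh => h1 hh.symm),
    coeff_sPoly G (fun J hJ hne => h2 J hJ (Finset.nonempty_iff_ne_empty.mpr hne)), sub_zero]

lemma LM_f1 (hkn : k ≤ n) (i : Fin k) :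
    IsLeadMon negDegLexGt (X (Fin.castLE hkn i) - sPoly G i : R2 n)
      (Finsupp.single (Fin.castLE hkn i) 1) := by
  classical
  constructor
  · rw [mem_support_iff, coeff_f1_self]; exact one_ne_zero
  · intro β hβ hne
    rcases support_f1 G hkn hβ with h | ⟨J, hJ, hJne, rfl⟩
    · exact absurd h hne
    have hcard : 1 ≤ J.card := Finset.card_pos.mpr (Finset.nonempty_iff_ne_empty.mpr hJne)
    have hdg1 : (∑ j, Finsupp.single (Fin.castLE hkn i) 1 j) = 1 := Dg_single _ _
    have hdg2 : (∑ j, indF J j) = J.card := Dg_indF _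
    rcases lt_or_eq_of_le hcard with hlt | heq
    · left; rw [hdg1, hdg2]; exact hlt
    · right
      refine ⟨by rw [hdg1, hdg2, ← heq], ⟨Fin.castLE hkn i, fun j hj => ?_, ?_⟩⟩
      · have hj' : (j : ℕ) < (i : ℕ) := hj
        have hjk : (j : ℕ) < k := hj'.trans i.isLt
        rw [Finsupp.single_eq_of_ne' (ne_of_gt hj), indF_apply, if_neg]
        intro hm
        exact absurd (mem_suppM G (hJ hm)) (Nat.not_le.mpr hjk)
      · rw [Finsupp.single_eq_same, indF_apply, if_neg]
        · exact Nat.zero_lt_one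
        · intro hm
          exact absurd (mem_suppM G (hJ hm)) (Nat.not_le.mpr i.isLt)


/-- substitution `X_i ↦ s_i` (for `i < k`), `X_j ↦ X_j` (for `j ≥ k`). -/
def gFun : Fin n → R2 n :=
  fun j => if h : (j : ℕ) < k then sPoly G ⟨j, h⟩ else X j

def ev : R2 n →ₐ[ZMod 2] R2 n := aeval (gFun G)

lemma ev_X_high {j : Fin n} (h : k ≤ (j : ℕ)) : ev G (X j) = X j := by
  rw [ev, aeval_X, gFun, dif_neg (Nat.not_lt.mpr h)]

lemma ev_X_low {j : Fin n} (h : (j : ℕ) < k) : ev G (X j) = sPoly G ⟨j, h⟩ := by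
  rw [ev, aeval_X, gFun, dif_pos h]

lemma ev_sPoly (i : Fin k) : ev G (sPoly G i) = sPoly G i := by
  rw [sPoly, map_sum]
  refine Finset.sum_congr rfl fun J hJ => ?_
  rw [Finset.mem_filter, Finset.mem_powerset] at hJ
  rw [map_prod]
  exact Finset.prod_congr rfl fun j hj => ev_X_high G (mem_suppM G (hJ.1 hj))

/-- the exponent vectors `2·e_j`, `j ≥ k`. -/
def sqSet (n k : ℕ) : Set (Fin n →₀ ℕ) :=
  {s | ∃ j : Fin n, k ≤ (j : ℕ) ∧ s = Finsupp.single j 2}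

def Jsq (n k : ℕ) : Ideal (R2 n) :=
  Ideal.span ((fun s => monomial s (1 : ZMod 2)) '' sqSet n k)

lemma mem_Jsq_iff {f : R2 n} :
    f ∈ Jsq n k ↔ ∀ m ∈ f.support, ∃ j : Fin n, k ≤ (j : ℕ) ∧ 2 ≤ m j := by
  rw [Jsq, mem_ideal_span_monomial_image]
  constructor
  · intro h m hm
    obtain ⟨si, ⟨j, hj, rfl⟩, hle⟩ := h m hm
    exact ⟨j, hj, Finsupp.single_le_iff.mp hle⟩
  · intro h m hm
    obtain ⟨j, hj, h2⟩ := h m hm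
    exact ⟨Finsupp.single j 2, ⟨j, hj, rfl⟩, Finsupp.single_le_iff.mpr h2⟩

lemma X_sq_mem_Jsq {j : Fin n} (h : k ≤ (j : ℕ)) : (X j : R2 n) ^ 2 ∈ Jsq n k := by
  refine Ideal.subset_span ⟨Finsupp.single j 2, ⟨j, h, rfl⟩, ?_⟩
  rw [X_pow_eq_monomial]

lemma ev_mem_Jsq (hkn : k ≤ n) {f : R2 n} (hf : f ∈ binCodeIdeal' n k hkn G) :
    ev G f ∈ Jsq n k := by
  have hle : binCodeIdeal' n k hkn G ≤ Ideal.comap (ev G).toRingHom (Jsq n k) := by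
    rw [binCodeIdeal', Ideal.span_le]
    rintro f (⟨i, rfl⟩ | ⟨i, hi, rfl⟩) <;> rw [SetLike.mem_coe, Ideal.mem_comap]
    · rw [key1 G hkn i]
      have : (ev G).toRingHom (X (Fin.castLE hkn i) - sPoly G i) = 0 := by
        have hlow : ((Fin.castLE hkn i : Fin n) : ℕ) < k := i.isLt
        have : (⟨((Fin.castLE hkn i : Fin n) : ℕ), hlow⟩ : Fin k) = i := by
          apply Fin.ext; rfl
        show ev G (X (Fin.castLE hkn i) - sPoly G i) = 0
        rw [map_sub, ev_X_low G hlow, this, ev_sPoly, sub_self]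
      rw [this]; exact Ideal.zero_mem _
    · rw [key2]
      show ev G (X i ^ 2) ∈ Jsq n k
      rw [map_pow, ev_X_high G hi]
      exact X_sq_mem_Jsq hi
  exact hle hf

/-- pass to the quotient by `Jsq`. -/
def psi : R2 n →+* (R2 n ⧸ Jsq n k) :=
  (Ideal.Quotient.mk (Jsq n k)).comp (ev G).toRingHom

lemma psi_nil_X (j : Fin n) : IsNilpotent (psi (k := k) G (X j)) := by
  classical
  by_cases h : (j : ℕ) < k
  · rw [psi, RingHom.comp_apply]
    show IsNilpotent (Ideal.Quotient.mk (Jsq n k) (ev G (X j)))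
    rw [ev_X_low G h, sPoly, map_sum]
    refine isNilpotent_sum fun J hJ => ?_
    rw [Finset.mem_filter, Finset.mem_powerset] at hJ
    rw [prod_X_eq]
    refine ⟨2, ?_⟩
    rw [← map_pow, pow_two, monomial_mul, one_mul, Ideal.Quotient.eq_zero_iff_mem]
    rw [mem_Jsq_iff]
    intro m hm
    rw [support_monomial, if_neg (one_ne_zero (α := ZMod 2))] at hm
    rw [Finset.mem_singleton] at hm
    obtain ⟨j0, hj0⟩ := Finset.nonempty_iff_ne_empty.mpr hJ.2
    refine ⟨j0, mem_suppM G (hJ.1 hj0), ?_⟩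
    rw [hm, Finsupp.add_apply, indF_apply, if_pos hj0]
  · refine ⟨2, ?_⟩
    rw [psi, RingHom.comp_apply, ← map_pow]
    show (Ideal.Quotient.mk (Jsq n k)) ((ev G (X j)) ^ 2) = 0
    rw [ev_X_high G (Nat.not_lt.mp h), Ideal.Quotient.eq_zero_iff_mem]
    exact X_sq_mem_Jsq (Nat.not_lt.mp h)

lemma psi_isUnit (u : unitSet n (ZMod 2)) : IsUnit (psi (k := k) G (u : R2 n)) := by
  classical
  have hc : constantCoeff (u : R2 n) = 1 := by
    exact Submonoid.mem_bot.mp (Submonoid.mem_comap.mp u.2)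
  set v : R2 n := (u : R2 n) - 1 with hv
  have hvmem : v ∈ Ideal.span (X '' (Set.univ : Set (Fin n)) : Set (R2 n)) := by
    rw [mem_ideal_span_X_image]
    intro m hm
    have hm0 : m ≠ 0 := by
      intro hz
      apply mem_support_iff.mp hm
      rw [hz]
      show constantCoeff v = 0
      rw [hv, map_sub, map_one, hc, sub_self]
    obtain ⟨i, hi⟩ := Finsupp.ne_iff.mp hm0
    exact ⟨i, Set.mem_univ i, by simpa using hi⟩
  have hnil : IsNilpotent (psi (k := k) G v) := by
    have hmap := Ideal.mem_map_of_mem (psi (k := k) G) hvmem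
    rw [Ideal.map_span] at hmap
    have hsub : (psi (k := k) G) '' (X '' (Set.univ : Set (Fin n)) : Set (R2 n)) ⊆
        (nilradical (R2 n ⧸ Jsq n k) : Set _) := by
      rintro _ ⟨_, ⟨j, _, rfl⟩, rfl⟩
      exact mem_nilradical.mpr (psi_nil_X G j)
    exact mem_nilradical.mp (Ideal.span_le.mpr hsub hmap)
  have : psi (k := k) G (u : R2 n) = psi (k := k) G v + 1 := by
    rw [hv, map_sub, map_one, sub_add_cancel]
  rw [this]
  exact IsNilpotent.isUnit_add_one hnil


lemma Dg_eq_sum_support (β : Fin n →₀ ℕ) : Dg β = ∑ j ∈ β.support, β j :=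
  (Finset.sum_subset (Finset.subset_univ _)
    (fun _ _ hx => Finsupp.notMem_support_iff.mp hx)).symm

lemma minDeg_mul {d e : ℕ} {p q : R2 n} (hp : ∀ γ ∈ p.support, d ≤ Dg γ)
    (hq : ∀ γ ∈ q.support, e ≤ Dg γ) : ∀ γ ∈ (p * q).support, d + e ≤ Dg γ := by
  classical
  intro γ hγ
  have h := MvPolynomial.support_mul p q hγ
  rw [Finset.mem_add] at h
  obtain ⟨a, ha, b, hb, rfl⟩ := h
  rw [Dg_add]
  exact add_le_add (hp a ha) (hq b hb)

lemma minDeg_pow {p : R2 n} (h1 : ∀ γ ∈ p.support, 1 ≤ Dg γ) (m : ℕ) :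
    ∀ γ ∈ (p ^ m).support, m ≤ Dg γ := by
  induction m with
  | zero => intro γ _; exact Nat.zero_le _
  | succ m ih =>
      rw [pow_succ]
      exact fun γ hγ => minDeg_mul ih h1 γ hγ

lemma minDeg_gFun (j : Fin n) : ∀ γ ∈ (gFun (k := k) G j).support, 1 ≤ Dg γ := by
  intro γ hγ
  by_cases h : (j : ℕ) < k
  · rw [gFun, dif_pos h] at hγ
    obtain ⟨J, _, hJne, rfl⟩ := support_sPoly G hγ
    rw [Dg_indF]
    exact Finset.card_pos.mpr (Finset.nonempty_iff_ne_empty.mpr hJne)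
  · rw [gFun, dif_neg h, support_X, Finset.mem_singleton] at hγ
    rw [hγ, Dg_single]

lemma minDeg_prod (T : Finset (Fin n)) (e : Fin n → ℕ) :
    ∀ γ ∈ (∏ j ∈ T, (gFun (k := k) G j) ^ (e j)).support, (∑ j ∈ T, e j) ≤ Dg γ := by
  classical
  induction T using Finset.induction_on with
  | empty => intro γ _; simp
  | @insert a s ha ih =>
      rw [Finset.prod_insert ha, Finset.sum_insert ha]
      exact minDeg_mul (minDeg_pow (minDeg_gFun G a) (e a)) ih

lemma ev_monomial (β : Fin n →₀ ℕ) (c : ZMod 2) :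
    ev G (monomial β c) = C c * ∏ j ∈ β.support, gFun (k := k) G j ^ β j := by
  rw [ev, aeval_monomial, algebraMap_eq]
  rfl

lemma ev_monomial_high {β : Fin n →₀ ℕ} (hβ : ∀ i : Fin n, (i : ℕ) < k → β i = 0)
    (c : ZMod 2) : ev G (monomial β c) = monomial β c := by
  rw [ev_monomial]
  have hX : ∀ j ∈ β.support, gFun (k := k) G j ^ β j = X j ^ β j := by
    intro j hj
    have : ¬ (j : ℕ) < k := fun h => Finsupp.mem_support_iff.mp hj (hβ j h)
    rw [gFun, dif_neg this]
  rw [Finset.prod_congr rfl hX, prod_X_pow_eq_monomial, C_mul_monomial, mul_one]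

lemma coeff_ev_eq {f : R2 n} {α : Fin n →₀ ℕ}
    (hlow : ∀ i : Fin n, (i : ℕ) < k → α i = 0)
    (hα : IsLeadMon negDegLexGt f α) : coeff α (ev G f) = coeff α f := by
  classical
  have hsum : ev G f = ∑ β ∈ f.support, ev G (monomial β (coeff β f)) := by
    rw [← map_sum, ← as_sum]
  rw [hsum, coeff_sum, Finset.sum_eq_single α]
  · rw [ev_monomial_high G hlow, coeff_monomial, if_pos rfl]
  · intro β hβ hne
    rcases hα.2 β hβ hne with hdeg | ⟨_, hlex⟩
    · rw [ev_monomial, coeff_C_mul]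
      have hns : α ∉ (∏ j ∈ β.support, gFun (k := k) G j ^ β j).support := by
        intro hmem
        have h1 := minDeg_prod G β.support β α hmem
        rw [← Dg_eq_sum_support] at h1
        exact absurd h1 (Nat.not_le.mpr hdeg)
      rw [MvPolynomial.notMem_support_iff.mp hns, mul_zero]
    · have hβlow : ∀ i : Fin n, (i : ℕ) < k → β i = 0 := by
        intro i hik
        obtain ⟨i0, heq, hlt⟩ := hlex
        have hi0 : ¬ (i0 : ℕ) < k := fun h => by
          rw [hlow i0 h] at hlt; exact Nat.not_lt_zero _ hlt
        have hii0 : i < i0 := show (i : ℕ) < (i0 : ℕ) from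
          lt_of_lt_of_le hik (Nat.not_lt.mp hi0)
        rw [← heq i hii0]
        exact hlow i hik
      rw [ev_monomial_high G hβlow, coeff_monomial, if_neg hne]
  · intro h
    exact absurd hα.1 h

lemma alpha_bad {f : R2 n} {α : Fin n →₀ ℕ} (hα : IsLeadMon negDegLexGt f α)
    (hev : ev G f ∈ Jsq n k) :
    (∃ i : Fin n, (i : ℕ) < k ∧ 1 ≤ α i) ∨ (∃ j : Fin n, k ≤ (j : ℕ) ∧ 2 ≤ α j) := by
  by_contra hcon
  push_neg at hcon
  obtain ⟨hlow', hhigh'⟩ := hcon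
  have hlow : ∀ i : Fin n, (i : ℕ) < k → α i = 0 := fun i h => Nat.lt_one_iff.mp (hlow' i h)
  have hc : coeff α (ev G f) ≠ 0 := by
    rw [coeff_ev_eq G hlow hα]
    exact mem_support_iff.mp hα.1
  obtain ⟨j, hjk, h2⟩ := mem_Jsq_iff.mp hev α (mem_support_iff.mpr hc)
  exact absurd h2 (Nat.not_le.mpr (hhigh' j hjk))

lemma LM_sq (j : Fin n) : IsLeadMon negDegLexGt ((X j : R2 n) ^ 2) (Finsupp.single j 2) := by
  classical
  constructor
  · rw [mem_support_iff, X_pow_eq_monomial, coeff_monomial, if_pos rfl]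
    exact one_ne_zero
  · intro β hβ hne
    rw [X_pow_eq_monomial, support_monomial, if_neg one_ne_zero, Finset.mem_singleton] at hβ
    exact absurd hβ hne

lemma mem_I_imp (hkn : k ≤ n) {f : R2 n}
    (hf : algebraMap (R2 n) (Localization (unitSet n (ZMod 2))) f ∈
      Ideal.map (algebraMap (R2 n) (Localization (unitSet n (ZMod 2))))
        (binCodeIdeal' n k hkn G)) :
    ev G f ∈ Jsq n k := by
  classical
  have hker : Ideal.map (algebraMap (R2 n) (Localization (unitSet n (ZMod 2))))
      (binCodeIdeal' n k hkn G) ≤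
        RingHom.ker (IsLocalization.lift (M := unitSet n (ZMod 2))
          (S := Localization (unitSet n (ZMod 2))) (psi_isUnit (k := k) G)) := by
    rw [Ideal.map_le_iff_le_comap]
    intro x hx
    rw [Ideal.mem_comap, RingHom.mem_ker, IsLocalization.lift_eq]
    show (Ideal.Quotient.mk (Jsq n k)) (ev G x) = 0
    exact Ideal.Quotient.eq_zero_iff_mem.mpr (ev_mem_Jsq G hkn hx)
  have h0 := hker hf
  rw [RingHom.mem_ker, IsLocalization.lift_eq] at h0
  have h1 : (Ideal.Quotient.mk (Jsq n k)) (ev G f) = 0 := h0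
  exact Ideal.Quotient.eq_zero_iff_mem.mp h1

end BSB

/-- Binary case (`p = 2`): `S = {X_i - ∑_{∅ ≠ J ⊆ supp(m_i)} X_J} ∪ {X_i²}` is a standard
basis of `I = I_C'·Loc_>(F_2[X])` under the negative degree lexicographic order. -/
theorem binary_standard_basis (n k : ℕ) (hkn : k ≤ n)
    (G : Fin k → Fin n → ZMod 2)
    (hstd : ∀ i j : Fin k, G i (Fin.castLE hkn j) = if i = j then 1 else 0) :
    let Sset : Set (MvPolynomial (Fin n) (ZMod 2)) :=
      {f | ∃ i : Fin k, f = X (Fin.castLE hkn i) -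
          ∑ J ∈ (suppM G i).powerset.filter (fun J => J ≠ ∅), ∏ j ∈ J, X j} ∪
        {f | ∃ i : Fin n, k ≤ (i : ℕ) ∧ f = X i ^ 2}
    let Loc := Localization (unitSet n (ZMod 2))
    let I : Ideal Loc :=
      Ideal.map (algebraMap (MvPolynomial (Fin n) (ZMod 2)) Loc) (binCodeIdeal' n k hkn G)
    let ltI : Ideal (MvPolynomial (Fin n) (ZMod 2)) :=
      Ideal.span (LTset {f | algebraMap (MvPolynomial (Fin n) (ZMod 2)) Loc f ∈ I ∧ f ≠ 0})
    (∀ f ∈ Sset, algebraMap (MvPolynomial (Fin n) (ZMod 2)) Loc f ∈ I) ∧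
    Ideal.span (LTset Sset) = ltI := by
  intro Sset Loc I ltI
  classical
  have hSgen : Sset =
      ({f | ∃ i : Fin k, f = (X (Fin.castLE hkn i) + 1) + ∏ j ∈ suppM G i, (X j + 1)} ∪
        {f | ∃ i : Fin n, k ≤ (i : ℕ) ∧ f = (X i + 1) ^ 2 + 1}) := by
    ext f
    simp only [Set.mem_union, Set.mem_setOf_eq]
    constructor
    · rintro (⟨i, rfl⟩ | ⟨i, hi, rfl⟩)
      · exact Or.inl ⟨i, (BSB.key1 G hkn i).symm⟩
      · exact Or.inr ⟨i, hi, (BSB.key2 i).symm⟩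
    · rintro (⟨i, rfl⟩ | ⟨i, hi, rfl⟩)
      · exact Or.inl ⟨i, BSB.key1 G hkn i⟩
      · exact Or.inr ⟨i, hi, BSB.key2 i⟩
  have part1 : ∀ f ∈ Sset, algebraMap (MvPolynomial (Fin n) (ZMod 2)) Loc f ∈ I := by
    intro f hf
    rw [hSgen] at hf
    exact Ideal.mem_map_of_mem _ (Ideal.subset_span hf)
  refine ⟨part1, le_antisymm ?_ ?_⟩
  · show Ideal.span (LTset Sset) ≤ Ideal.span
      (LTset {f | algebraMap (MvPolynomial (Fin n) (ZMod 2)) Loc f ∈ I ∧ f ≠ 0})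
    apply Ideal.span_mono
    rintro m ⟨f, hf, α, hα, rfl⟩
    refine ⟨f, ⟨part1 f hf, ?_⟩, α, hα, rfl⟩
    intro h0
    rw [h0] at hα
    simpa using hα.1
  · show Ideal.span
      (LTset {f | algebraMap (MvPolynomial (Fin n) (ZMod 2)) Loc f ∈ I ∧ f ≠ 0}) ≤
      Ideal.span (LTset Sset)
    rw [Ideal.span_le]
    rintro m ⟨f, ⟨hfI, hf0⟩, α, hα, rfl⟩
    have hev : BSB.ev G f ∈ BSB.Jsq n k := BSB.mem_I_imp G hkn hfI
    have hbad := BSB.alpha_bad G hα hev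
    have hc : MvPolynomial.coeff α f ≠ 0 := mem_support_iff.mp hα.1
    have hA : ((fun s => monomial s (1 : ZMod 2)) ''
        {s | (∃ i : Fin n, (i : ℕ) < k ∧ s = Finsupp.single i 1) ∨
             (∃ j : Fin n, k ≤ (j : ℕ) ∧ s = Finsupp.single j 2)}) ⊆ LTset Sset := by
      rintro _ ⟨s, hs, rfl⟩
      rcases hs with ⟨i, hik, rfl⟩ | ⟨j, hjk, rfl⟩
      · have hcast : Fin.castLE hkn (⟨(i : ℕ), hik⟩ : Fin k) = i := Fin.ext rfl
        refine ⟨X (Fin.castLE hkn (⟨(i : ℕ), hik⟩ : Fin k)) - BSB.sPoly G ⟨(i : ℕ), hik⟩,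
          Or.inl ⟨⟨(i : ℕ), hik⟩, rfl⟩,
          Finsupp.single (Fin.castLE hkn (⟨(i : ℕ), hik⟩ : Fin k)) 1,
          BSB.LM_f1 G hkn ⟨(i : ℕ), hik⟩, ?_⟩
        rw [BSB.coeff_f1_self G hkn, hcast]
      · refine ⟨(X j : MvPolynomial (Fin n) (ZMod 2)) ^ 2, Or.inr ⟨j, hjk, rfl⟩,
          Finsupp.single j 2, BSB.LM_sq j, ?_⟩
        rw [X_pow_eq_monomial, coeff_monomial, if_pos rfl]
    refine Ideal.span_mono hA ?_
    rw [mem_ideal_span_monomial_image]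
    intro xi hxi
    rw [support_monomial, if_neg hc, Finset.mem_singleton] at hxi
    subst hxi
    rcases hbad with ⟨i, hik, h1⟩ | ⟨j, hjk, h2⟩
    · exact ⟨Finsupp.single i 1, Or.inl ⟨i, hik, rfl⟩, Finsupp.single_le_iff.mpr h1⟩
    · exact ⟨Finsupp.single j 2, Or.inr ⟨j, hjk, rfl⟩, Finsupp.single_le_iff.mpr h2⟩

end
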